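/- Let b be locally integrable on R^m with dyadic BMO norm at most 1, J_0 a dyadic cube, and let F(J_0) be the iterated stopping family generated by the stopping condition |⟨b⟩_J − ⟨b⟩_{J_0}| > 4 (iterating inside each stopping cube). For J ∈ F(J_0), let π_F Q denote the minimal stopping cube containing a dyadic cube Q. Then for every J ∈ F(J_0), the sum of the martingale differences Δ_Q b over all dyadic Q ⊂ J_0 with π_F Q = J is bounded in L^∞ norm by an absolute constant (depending only on dimension). -/

import Mathlib

open MeasureTheory
open scoped ENNReal Classical

noncomputable section

/-- `ℝ^m`, modeled as functions `Fin m → ℝ`. -/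
abbrev Rd (m : ℕ) := Fin m → ℝ

/-- A dyadic cube in `ℝ^m` of the standard dyadic grid, encoded by its scale `k : ℤ`
(side length `2^k`) and its position `c : Fin m → ℤ`. -/
abbrev DC (m : ℕ) := ℤ × (Fin m → ℤ)

/-- The set in `ℝ^m` corresponding to an encoded dyadic cube. -/
def cubeSet {m : ℕ} (I : DC m) : Set (Rd m) :=
  {x | ∀ i, (I.2 i : ℝ) * 2 ^ I.1 ≤ x i ∧ x i < ((I.2 i : ℝ) + 1) * 2 ^ I.1}

/-- The dyadic cube of scale `k` containing the point `x`. -/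
def cubeAt (m : ℕ) (k : ℤ) (x : Rd m) : DC m := (k, fun i => ⌊x i / 2 ^ k⌋)

variable {m n : ℕ} {E : Type*} [NormedAddCommGroup E] [NormedSpace ℝ E]

/-- The average `⟨f⟩_I` of a (vector-valued) function over a dyadic cube. -/
def avg (I : DC m) (f : Rd m → E) : E :=
  ((volume (cubeSet I)).toReal)⁻¹ • ∫ x in cubeSet I, f x

/-- The martingale difference `Δ_I f`. -/
def mdiff (f : Rd m → E) (I : DC m) (x : Rd m) : E :=
  if x ∈ cubeSet I then avg (cubeAt m (I.1 - 1) x) f - avg I f else 0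

/-- The martingale block `Δ_K^i f = ∑_{I^{(i)} = K} Δ_I f`. -/
def mblock (i : ℕ) (f : Rd m → E) (K : DC m) (x : Rd m) : E :=
  if x ∈ cubeSet K then mdiff f (cubeAt m (K.1 - (i : ℤ)) x) x else 0

/-- Martingale difference in the first variable, `Δ_I^1 f`. -/
def mdiff1 (f : Rd n → Rd m → E) (I : DC n) (x₁ : Rd n) (x₂ : Rd m) : E :=
  mdiff (fun y₁ => f y₁ x₂) I x₁

/-- Martingale difference in the second variable, `Δ_J^2 f`. -/
def mdiff2 (f : Rd n → Rd m → E) (J : DC m) (x₁ : Rd n) (x₂ : Rd m) : E :=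
  mdiff (f x₁) J x₂

/-- The bi-parameter martingale difference `Δ_{I×J} f = Δ_I^1 (Δ_J^2 f)`. -/
def mdiffBi (f : Rd n → Rd m → E) (I : DC n) (J : DC m) (x₁ : Rd n) (x₂ : Rd m) : E :=
  mdiff1 (fun y₁ y₂ => mdiff2 f J y₁ y₂) I x₁ x₂

/-- The bi-parameter martingale block `Δ^{i,j}_{K×V} f`. -/
def mblockBi (i j : ℕ) (f : Rd n → Rd m → E) (K : DC n) (V : DC m)
    (x₁ : Rd n) (x₂ : Rd m) : E :=
  if x₁ ∈ cubeSet K ∧ x₂ ∈ cubeSet V then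
    mdiffBi f (cubeAt n (K.1 - (i : ℤ)) x₁) (cubeAt m (V.1 - (j : ℤ)) x₂) x₁ x₂
  else 0

/-- A sign pattern `η` is cancellative if it is nonzero. -/
def Cancel {m : ℕ} (η : Fin m → Bool) : Prop := ∃ i, η i = true

/-- The `L²`-normalised Haar function `h_I^η`. -/
def haar {m : ℕ} (I : DC m) (η : Fin m → Bool) (x : Rd m) : ℝ :=
  if x ∈ cubeSet I then
    ((2 : ℝ) ^ I.1) ^ (-(m : ℝ) / 2) *
      ∏ i, (if η i then (if x i < ((I.2 i : ℝ) + 1 / 2) * 2 ^ I.1 then (1 : ℝ) else -1) else 1)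
  else 0

/-- The Haar coefficient `⟨b, h_I^η⟩`. -/
def haarCoeff {m : ℕ} (b : Rd m → ℝ) (I : DC m) (η : Fin m → Bool) : ℝ :=
  ∫ y, b y * haar I η y

/-- `b` has dyadic BMO norm at most `B`. -/
def BMOle {m : ℕ} (b : Rd m → ℝ) (B : ℝ) : Prop :=
  ∀ I : DC m, avg I (fun x => |b x - avg I b|) ≤ B

/-- The dyadic paraproduct `π_b f = ∑_I ⟨f⟩_I Δ_I b`. -/
def paraproduct {m : ℕ} (b : Rd m → ℝ) (f : Rd m → E) (x : Rd m) : E :=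
  ∑' I : DC m, mdiff b I x • avg I f

/-- The sign `±1` attached to a boolean. -/
def sgn (b : Bool) : ℝ := if b then (1 : ℝ) else -1

/-- The `q`-th moment `(𝔼‖∑ εᵢ eᵢ‖^q)^{1/q}` of a Rademacher sum, with the random signs
realised on the canonical finite probability space `Fin N → Bool`. -/
def signAvg (q : ℝ) {N : ℕ} (e : Fin N → E) : ℝ :=
  ((∑ ω : Fin N → Bool, ‖∑ i, sgn (ω i) • e i‖ ^ q) / 2 ^ N) ^ (1 / q)

/-- A Banach space is UMD if martingale difference sequences are unconditional in `L^p`. -/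
def IsUMD (E : Type*) [NormedAddCommGroup E] [NormedSpace ℝ E] [CompleteSpace E] : Prop :=
  ∀ p : ℝ, 1 < p → ∃ β : ℝ≥0∞, β ≠ ⊤ ∧
    ∀ (Ω : Type) [mΩ : MeasurableSpace Ω] (P : Measure Ω), IsProbabilityMeasure P →
      ∀ (ℱ : Filtration ℕ mΩ) (g : ℕ → Ω → E), Martingale g ℱ P →
        ∀ (ε : ℕ → ℝ), (∀ i, ε i = 1 ∨ ε i = -1) → ∀ N : ℕ,
          eLpNorm (fun ω => ∑ i ∈ Finset.range N, ε i • (g (i + 1) ω - g i ω))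
              (ENNReal.ofReal p) P
            ≤ β * eLpNorm (fun ω => g N ω - g 0 ω) (ENNReal.ofReal p) P

/-- Pisier's property (α). -/
def HasPisierAlpha (E : Type*) [NormedAddCommGroup E] [NormedSpace ℝ E] : Prop :=
  ∃ C : ℝ, ∀ (N : ℕ) (α : Fin N → Fin N → ℝ), (∀ i j, |α i j| ≤ 1) →
    ∀ e : Fin N → Fin N → E,
      ((∑ ω : Fin N → Bool, ∑ ω' : Fin N → Bool,
          ‖∑ i, ∑ j, (sgn (ω i) * sgn (ω' j) * α i j) • e i j‖ ^ 2) / 4 ^ N) ^ (1 / 2 : ℝ)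
        ≤ C * ((∑ ω : Fin N → Bool, ∑ ω' : Fin N → Bool,
          ‖∑ i, ∑ j, (sgn (ω i) * sgn (ω' j)) • e i j‖ ^ 2) / 4 ^ N) ^ (1 / 2 : ℝ)

/-- `E` has (Rademacher) type `p` with constant `τ`. -/
def HasTypeWith (E : Type*) [NormedAddCommGroup E] [NormedSpace ℝ E] (p τ : ℝ) : Prop :=
  ∀ (N : ℕ) (e : Fin N → E), signAvg 2 e ≤ τ * (∑ i, ‖e i‖ ^ p) ^ (1 / p)

/-- `E` has (Rademacher) cotype `c` with constant `τ`. -/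
def HasCotypeWith (E : Type*) [NormedAddCommGroup E] [NormedSpace ℝ E] (c τ : ℝ) : Prop :=
  ∀ (N : ℕ) (e : Fin N → E), (∑ i, ‖e i‖ ^ c) ^ (1 / c) ≤ τ * signAvg 2 e

/-- `E`, together with the realisation map `val`, is a Banach function space (function lattice)
over the σ-finite measure space `(A, μ)`. -/
structure IsBFS (A : Type) [MeasurableSpace A] (μ : Measure A)
    (E : Type*) [NormedAddCommGroup E] [NormedSpace ℝ E] (val : E → A → ℝ) : Prop where
  measurable_val : ∀ e, Measurable (val e)
  map_add : ∀ e e', val (e + e') =ᵐ[μ] fun a => val e a + val e' a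
  map_smul : ∀ (c : ℝ) e, val (c • e) =ᵐ[μ] fun a => c * val e a
  injective : ∀ e, val e =ᵐ[μ] (fun _ => (0 : ℝ)) → e = 0
  mono : ∀ e e', (∀ᵐ a ∂μ, |val e a| ≤ |val e' a|) → ‖e‖ ≤ ‖e'‖
  ideal : ∀ (e : E) (g : A → ℝ), Measurable g → (∀ᵐ a ∂μ, |g a| ≤ |val e a|) →
    ∃ e' : E, val e' =ᵐ[μ] g

/-- The mixed norm `‖f‖_{L^q(ℝ^n; L^p(ℝ^m; E))}`. -/
def mixedNorm (q p : ℝ) (f : Rd n → Rd m → E) : ℝ≥0∞ :=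
  (∫⁻ x₁, ((∫⁻ x₂, (‖f x₁ x₂‖₊ : ℝ≥0∞) ^ p) ^ (1 / p)) ^ q) ^ (1 / q)

/-- The `L^q(ℝ^m; E)` norm. -/
def LpN (q : ℝ) (f : Rd m → E) : ℝ≥0∞ := eLpNorm f (ENNReal.ofReal q) volume

/-- Rademacher average of `L^q` norms (used to express `R`-boundedness on `L^q(ℝ^m;E)`). -/
def signLp (q : ℝ) {N : ℕ} (g : Fin N → Rd m → E) : ℝ≥0∞ :=
  ((∑ ω : Fin N → Bool, LpN q (fun x => ∑ i, sgn (ω i) • g i x) ^ 2) / 2 ^ N) ^ (1 / 2 : ℝ)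

/-- Rademacher average of mixed norms (used to express `R`-boundedness on
`L^q(ℝ^n; L^p(ℝ^m; E))`). -/
def signMixed (q p : ℝ) {N : ℕ} (g : Fin N → Rd n → Rd m → E) : ℝ≥0∞ :=
  ((∑ ω : Fin N → Bool, mixedNorm q p (fun x₁ x₂ => ∑ i, sgn (ω i) • g i x₁ x₂) ^ 2)
      / 2 ^ N) ^ (1 / 2 : ℝ)

/-- The averaging operator `A_V` with operator-valued kernel `a`. -/
def avgOp (a : Rd m → Rd m → (E →L[ℝ] E)) (V : DC m) (g : Rd m → E) (z : Rd m) : E :=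
  if z ∈ cubeSet V then ((volume (cubeSet V)).toReal)⁻¹ • ∫ y in cubeSet V, a z y (g y) else 0

/-- The operator-valued dyadic shift `S^{i₁,i₂} f = ∑_V Δ_V^{i₂} A_V Δ_V^{i₁} f`. -/
def dyadicShift (i₁ i₂ : ℕ) (a : DC m → Rd m → Rd m → (E →L[ℝ] E))
    (f : Rd m → E) (x : Rd m) : E :=
  ∑' V : DC m, mblock i₂ (avgOp (a V) V (fun y => mblock i₁ f V y)) V x

/-- The bi-parameter averaging operator `A_{K,V}`. -/
def avgOpBi (a : (Rd n × Rd m) → (Rd n × Rd m) → (E →L[ℝ] E)) (K : DC n) (V : DC m)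
    (g : Rd n → Rd m → E) (z₁ : Rd n) (z₂ : Rd m) : E :=
  if z₁ ∈ cubeSet K ∧ z₂ ∈ cubeSet V then
    ((volume (cubeSet K)).toReal * (volume (cubeSet V)).toReal)⁻¹ •
      ∫ y₁ in cubeSet K, ∫ y₂ in cubeSet V, a (z₁, z₂) (y₁, y₂) (g y₁ y₂)
  else 0

/-- The operator-valued bi-parameter dyadic shift. -/
def dyadicShiftBi (i₁ i₂ j₁ j₂ : ℕ)
    (a : DC n → DC m → (Rd n × Rd m) → (Rd n × Rd m) → (E →L[ℝ] E))
    (f : Rd n → Rd m → E) (x₁ : Rd n) (x₂ : Rd m) : E :=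
  ∑' K : DC n, ∑' V : DC m,
    mblockBi i₂ j₂
      (fun z₁ z₂ => avgOpBi (a K V) K V (fun y₁ y₂ => mblockBi i₁ j₁ f K V y₁ y₂) z₁ z₂)
      K V x₁ x₂

/-- The average of a function over a product `V × U` of dyadic cubes. -/
def biAvg (V : DC n) (U : DC m) (f : Rd n → Rd m → E) : E :=
  ((volume (cubeSet V)).toReal * (volume (cubeSet U)).toReal)⁻¹ •
    ∫ y₁ in cubeSet V, ∫ y₂ in cubeSet U, f y₁ y₂

/-- The bi-parameter Haar coefficient `⟨b, h_V^η ⊗ h_U^θ⟩`. -/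
def haarCoeff2 (b : Rd n → Rd m → ℝ) (V : DC n) (η : Fin n → Bool)
    (U : DC m) (θ : Fin m → Bool) : ℝ :=
  ∫ y₁, ∫ y₂, b y₁ y₂ * (haar V η y₁ * haar U θ y₂)

/-- The standard full bi-parameter paraproduct `Π_b`. -/
def fullPara (b : Rd n → Rd m → ℝ) (f : Rd n → Rd m → E) (x₁ : Rd n) (x₂ : Rd m) : E :=
  ∑' V : DC n, ∑' U : DC m, ∑' η : Fin n → Bool, ∑' θ : Fin m → Bool,
    if Cancel η ∧ Cancel θ then
      (haarCoeff2 b V η U θ * (haar V η x₁ * haar U θ x₂)) • biAvg V U f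
    else 0

/-- The mixed full bi-parameter paraproduct `Π^{mixed}_b`. -/
def mixedPara (b : Rd n → Rd m → ℝ) (f : Rd n → Rd m → E) (x₁ : Rd n) (x₂ : Rd m) : E :=
  ∑' V : DC n, ∑' U : DC m, ∑' η : Fin n → Bool, ∑' θ : Fin m → Bool,
    if Cancel η ∧ Cancel θ then
      (haarCoeff2 b V η U θ *
          (Set.indicator (cubeSet V) (fun _ => (1 : ℝ)) x₁ *
            ((volume (cubeSet V)).toReal)⁻¹ * haar U θ x₂)) •
        (∫ y₁, haar V η y₁ •
          (((volume (cubeSet U)).toReal)⁻¹ • ∫ y₂ in cubeSet U, f y₁ y₂))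
    else 0

/-- An admissible set `Ω` for the definition of the product BMO norm: finite measure, and
every point of `Ω` lies in a product of dyadic cubes contained in `Ω`. -/
def AdmissibleOmega {n m : ℕ} (Ω : Set (Rd n × Rd m)) : Prop :=
  volume Ω < ⊤ ∧
    ∀ x ∈ Ω, ∃ (V : DC n) (U : DC m),
      x ∈ cubeSet V ×ˢ cubeSet U ∧ cubeSet V ×ˢ cubeSet U ⊆ Ω

/-- `b` has dyadic product BMO norm at most `B` (Chang–Fefferman characterization via
the Haar coefficient sequence). -/
def BMOprodFnLe {n m : ℕ} (b : Rd n → Rd m → ℝ) (B : ℝ) : Prop :=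
  ∀ Ω : Set (Rd n × Rd m), AdmissibleOmega Ω →
    (∑' V : DC n, ∑' U : DC m,
        (if cubeSet V ×ˢ cubeSet U ⊆ Ω then
          ∑ η : Fin n → Bool, ∑ θ : Fin m → Bool,
            (if Cancel η ∧ Cancel θ then haarCoeff2 b V η U θ ^ 2 else 0)
        else 0))
      ≤ B ^ 2 * (volume Ω).toReal

/-- The partial Haar pairing `⟨f, h_{I}^η⟩₁` in the first variable. -/
def pairing1 (f : Rd n → Rd m → E) (I : DC n) (η : Fin n → Bool) (x₂ : Rd m) : E :=
  ∫ y₁, haar I η y₁ • f y₁ x₂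

/-- The bi-parameter partial paraproduct
`P f = ∑_K ∑_{I₁^{(i₁)} = I₂^{(i₂)} = K} h_{I₂} ⊗ π_{b_{K,I₁,I₂}} (⟨f, h_{I₁}⟩₁)`. -/
def partialPara (i₁ i₂ : ℕ)
    (b : DC n → DC n → DC n → (Fin n → Bool) → (Fin n → Bool) → Rd m → ℝ)
    (f : Rd n → Rd m → E) (x₁ : Rd n) (x₂ : Rd m) : E :=
  ∑' K : DC n, ∑' I₁ : DC n, ∑' I₂ : DC n, ∑' η₁ : Fin n → Bool, ∑' η₂ : Fin n → Bool,
    if Cancel η₁ ∧ Cancel η₂ ∧ I₁.1 + (i₁ : ℤ) = K.1 ∧ cubeSet I₁ ⊆ cubeSet K ∧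
        I₂.1 + (i₂ : ℤ) = K.1 ∧ cubeSet I₂ ⊆ cubeSet K then
      haar I₂ η₂ x₁ • paraproduct (b K I₁ I₂ η₁ η₂) (pairing1 f I₁ η₁) x₂
    else 0

/-- The bi-parameter dyadic (lattice) strong maximal function, acting pointwise in the
lattice variable `a`. -/
def strongMax {A : Type} (val : E → A → ℝ) (f : Rd n → Rd m → E)
    (x₁ : Rd n) (x₂ : Rd m) (a : A) : ℝ :=
  ⨆ V : DC n, ⨆ U : DC m,
    if x₁ ∈ cubeSet V ∧ x₂ ∈ cubeSet U then
      ((volume (cubeSet V)).toReal * (volume (cubeSet U)).toReal)⁻¹ *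
        ∫ y₁ in cubeSet V, ∫ y₂ in cubeSet U, |val (f y₁ y₂) a|
    else 0

end

/-- `J` is a (first generation) stopping child of `P` for the function `b`:
a maximal dyadic cube inside `P` with `|⟨b⟩_J - ⟨b⟩_P| > 4`. -/
def isStopChild {m : ℕ} (b : Rd m → ℝ) (P J : DC m) : Prop :=
  (cubeSet J ⊆ cubeSet P ∧ 4 < |avg J b - avg P b|) ∧
  ∀ J' : DC m, (cubeSet J' ⊆ cubeSet P ∧ 4 < |avg J' b - avg P b|) →
    cubeSet J ⊆ cubeSet J' → cubeSet J = cubeSet J'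

/-- The iterated stopping family `F(J₀) = ⋃_j F^j(J₀)` generated by the stopping condition. -/
inductive stopFam {m : ℕ} (b : Rd m → ℝ) (J₀ : DC m) : DC m → Prop
  | base : stopFam b J₀ J₀
  | step (P J : DC m) : stopFam b J₀ P → isStopChild b P J → stopFam b J₀ J


namespace Stmt2Aux
open MeasureTheory
variable {m : ℕ}

lemma two_zpow_pos (k : ℤ) : (0:ℝ) < 2 ^ k := zpow_pos (by norm_num) k

lemma mem_cubeAt (k : ℤ) (x : Rd m) : x ∈ cubeSet (cubeAt m k x) := by
  intro i
  constructor
  · calc ((⌊x i / 2^k⌋ : ℝ)) * 2^k ≤ (x i / 2^k) * 2^k :=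
          mul_le_mul_of_nonneg_right (Int.floor_le _) (two_zpow_pos k).le
      _ = x i := div_mul_cancel₀ _ (two_zpow_pos k).ne'
  · calc x i = (x i / 2^k) * 2^k := (div_mul_cancel₀ _ (two_zpow_pos k).ne').symm
      _ < ((⌊x i / 2^k⌋ : ℝ) + 1) * 2^k :=
          mul_lt_mul_of_pos_right (Int.lt_floor_add_one _) (two_zpow_pos k)

lemma eq_cubeAt_of_mem {I : DC m} {x : Rd m} (h : x ∈ cubeSet I) : I = cubeAt m I.1 x := by
  obtain ⟨k, c⟩ := I
  simp only [cubeAt, Prod.mk.injEq, true_and]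
  funext i
  obtain ⟨h1, h2⟩ := h i
  symm
  rw [Int.floor_eq_iff]
  constructor
  · exact (le_div_iff₀ (two_zpow_pos k)).mpr h1
  · exact (div_lt_iff₀ (two_zpow_pos k)).mpr h2

lemma nested (x : Rd m) {k k' : ℤ} (h : k ≤ k') :
    cubeSet (cubeAt m k x) ⊆ cubeSet (cubeAt m k' x) := by
  intro y hy i
  obtain ⟨h1, h2⟩ := hy i
  obtain ⟨ha1, ha2⟩ := mem_cubeAt (m := m) k x i
  obtain ⟨hb1, hb2⟩ := mem_cubeAt (m := m) k' x i
  set a := ⌊x i / 2^k⌋ with hadef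
  set b := ⌊x i / 2^k'⌋ with hbdef
  set d := (k' - k).toNat with hddef
  have hD : (2:ℝ)^k' = ((2^d : ℤ) : ℝ) * 2^k := by
    push_cast
    rw [← zpow_natCast (2:ℝ) d, ← zpow_add₀ (two_ne_zero)]
    congr 1
    omega
  have key1 : b * 2^d ≤ a := by
    have hlt : (b:ℝ) * 2^k' < ((a:ℝ) + 1) * 2^k := lt_of_le_of_lt hb1 ha2
    rw [hD, ← mul_assoc] at hlt
    have h3 : (b:ℝ) * ((2^d : ℤ) : ℝ) < (a:ℝ) + 1 :=
      lt_of_mul_lt_mul_right hlt (two_zpow_pos k).le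
    have h4 : b * 2^d < a + 1 := by exact_mod_cast h3
    omega
  have key2 : a + 1 ≤ (b + 1) * 2^d := by
    have hlt : (a:ℝ) * 2^k < ((b:ℝ) + 1) * 2^k' := lt_of_le_of_lt ha1 hb2
    rw [hD, ← mul_assoc] at hlt
    have h3 : (a:ℝ) < ((b:ℝ) + 1) * ((2^d : ℤ) : ℝ) :=
      lt_of_mul_lt_mul_right hlt (two_zpow_pos k).le
    have h4 : a < (b + 1) * 2^d := by exact_mod_cast h3
    omega
  constructor
  · calc (b:ℝ) * 2^k' = ((b * 2^d : ℤ) : ℝ) * 2^k := by rw [hD]; push_cast; ring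
      _ ≤ (a:ℝ) * 2^k := by
          apply mul_le_mul_of_nonneg_right _ (two_zpow_pos k).le
          exact_mod_cast key1
      _ ≤ y i := h1
  · calc y i < ((a:ℝ) + 1) * 2^k := h2
      _ ≤ (((b+1) * 2^d : ℤ) : ℝ) * 2^k := by
          apply mul_le_mul_of_nonneg_right _ (two_zpow_pos k).le
          exact_mod_cast key2
      _ = ((b:ℝ) + 1) * 2^k' := by rw [hD]; push_cast; ring

lemma volume_cubeSet (I : DC m) :
    volume (cubeSet I) = ENNReal.ofReal ((2:ℝ)^I.1) ^ m := by
  have hpi : cubeSet I =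
      Set.pi Set.univ (fun i => Set.Ico ((I.2 i : ℝ) * 2^I.1) (((I.2 i : ℝ) + 1) * 2^I.1)) := by
    ext y
    simp [cubeSet, Set.mem_pi, Set.mem_Ico]
  rw [hpi, volume_pi_pi]
  have : ∀ i : Fin m, volume (Set.Ico ((I.2 i : ℝ) * 2^I.1) (((I.2 i : ℝ) + 1) * 2^I.1))
      = ENNReal.ofReal ((2:ℝ)^I.1) := by
    intro i
    rw [Real.volume_Ico]
    congr 1
    ring
  rw [Finset.prod_congr rfl (fun i _ => this i), Finset.prod_const, Finset.card_univ,
    Fintype.card_fin]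

lemma volume_cubeSet_toReal (I : DC m) :
    (volume (cubeSet I)).toReal = ((2:ℝ)^I.1) ^ m := by
  rw [volume_cubeSet, ENNReal.toReal_pow, ENNReal.toReal_ofReal (two_zpow_pos I.1).le]

lemma volume_toReal_pos (I : DC m) : 0 < (volume (cubeSet I)).toReal := by
  rw [volume_cubeSet_toReal]; positivity

lemma volume_cubeSet_ne_top (I : DC m) : volume (cubeSet I) ≠ ⊤ := by
  rw [volume_cubeSet]
  exact ENNReal.pow_ne_top ENNReal.ofReal_ne_top

lemma scale_le_of_subset (hm : m ≠ 0) {I I' : DC m} (h : cubeSet I ⊆ cubeSet I') :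
    I.1 ≤ I'.1 := by
  have h1 := ENNReal.toReal_mono (volume_cubeSet_ne_top I') (measure_mono h)
  rw [volume_cubeSet_toReal, volume_cubeSet_toReal] at h1
  have h2 : (2:ℝ)^I.1 ≤ 2^I'.1 :=
    (pow_le_pow_iff_left₀ (two_zpow_pos _).le (two_zpow_pos _).le hm).mp h1
  exact (zpow_le_zpow_iff_right₀ one_lt_two).mp h2

lemma integrableOn_cubeSet {b : Rd m → ℝ} (hb : LocallyIntegrable b volume) (I : DC m) :
    IntegrableOn b (cubeSet I) volume := by
  have hsub : cubeSet I ⊆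
      Set.pi Set.univ (fun i => Set.Icc ((I.2 i : ℝ) * 2^I.1) (((I.2 i : ℝ) + 1) * 2^I.1)) := by
    intro y hy
    rw [Set.mem_univ_pi]
    intro i
    exact ⟨(hy i).1, (hy i).2.le⟩
  exact (hb.integrableOn_isCompact (isCompact_univ_pi fun i => isCompact_Icc)).mono_set hsub

lemma avg_eq (I : DC m) (f : Rd m → ℝ) :
    avg I f = ((volume (cubeSet I)).toReal)⁻¹ * ∫ x in cubeSet I, f x := by
  rw [avg, smul_eq_mul]

lemma avg_sub_const {b : Rd m → ℝ} (hb : LocallyIntegrable b volume) (I : DC m) (c : ℝ) :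
    avg I (fun y => b y - c) = avg I b - c := by
  have hconst : IntegrableOn (fun _ : Rd m => c) (cubeSet I) volume := by
    apply (integrableOn_const_iff).mpr
    exact Or.inr (lt_top_iff_ne_top.mpr (volume_cubeSet_ne_top I))
  have hv : (volume (cubeSet I)).toReal ≠ 0 := (volume_toReal_pos I).ne'
  rw [avg_eq, avg_eq, integral_sub (integrableOn_cubeSet hb I) hconst, setIntegral_const,
    smul_eq_mul]
  field_simp
  rfl

lemma abs_avg_le_avg_abs (I : DC m) (f : Rd m → ℝ) :
    |avg I f| ≤ avg I (fun y => |f y|) := by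
  rw [avg_eq, avg_eq, abs_mul, abs_inv, abs_of_nonneg ENNReal.toReal_nonneg]
  apply mul_le_mul_of_nonneg_left _ (inv_nonneg.mpr ENNReal.toReal_nonneg)
  simpa using norm_integral_le_integral_norm (μ := volume.restrict (cubeSet I)) f

lemma child_bound {b : Rd m → ℝ} (hb : LocallyIntegrable b volume) (hB : BMOle b 1)
    (k : ℤ) (x : Rd m) :
    |avg (cubeAt m (k-1) x) b - avg (cubeAt m k x) b| ≤ 2 ^ m := by
  set Q : DC m := cubeAt m k x with hQ
  set Q' : DC m := cubeAt m (k-1) x with hQ'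
  have hsub : cubeSet Q' ⊆ cubeSet Q := nested x (by omega)
  set c : ℝ := avg Q b with hc
  have hint : IntegrableOn (fun y => |b y - c|) (cubeSet Q) volume := by
    apply Integrable.abs
    apply Integrable.sub (integrableOn_cubeSet hb Q)
    exact (integrableOn_const_iff).mpr (Or.inr (lt_top_iff_ne_top.mpr (volume_cubeSet_ne_top Q)))
  have hmono : ∫ y in cubeSet Q', |b y - c| ≤ ∫ y in cubeSet Q, |b y - c| := by
    apply setIntegral_mono_set hint
    · exact Filter.Eventually.of_forall (fun y => abs_nonneg _)
    · exact HasSubset.Subset.eventuallyLE hsub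
  have e1 : (volume (cubeSet Q')).toReal = ((2:ℝ)^(k-1 : ℤ))^m := volume_cubeSet_toReal Q'
  have e2 : (volume (cubeSet Q)).toReal = ((2:ℝ)^(k : ℤ))^m := volume_cubeSet_toReal Q
  have hkey : ((2:ℝ)^(k : ℤ))^m = 2^m * ((2:ℝ)^(k-1 : ℤ))^m := by
    rw [← mul_pow]
    congr 1
    rw [show (2:ℝ) * 2^(k-1 : ℤ) = 2^(1 : ℤ) * 2^(k-1 : ℤ) by norm_num,
      ← zpow_add₀ (two_ne_zero : (2:ℝ) ≠ 0)]
    congr 1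
    ring
  have hratio : ((volume (cubeSet Q')).toReal)⁻¹ = 2^m * ((volume (cubeSet Q)).toReal)⁻¹ := by
    rw [e1, e2, hkey, mul_inv, ← mul_assoc, mul_inv_cancel₀ (by positivity : (2:ℝ)^m ≠ 0),
      one_mul]
  calc |avg Q' b - c| = |avg Q' (fun y => b y - c)| := by rw [avg_sub_const hb]
    _ ≤ avg Q' (fun y => |b y - c|) := abs_avg_le_avg_abs _ _
    _ = ((volume (cubeSet Q')).toReal)⁻¹ * ∫ y in cubeSet Q', |b y - c| := avg_eq _ _
    _ ≤ ((volume (cubeSet Q')).toReal)⁻¹ * ∫ y in cubeSet Q, |b y - c| :=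
        mul_le_mul_of_nonneg_left hmono (inv_nonneg.mpr ENNReal.toReal_nonneg)
    _ = 2^m * (((volume (cubeSet Q)).toReal)⁻¹ * ∫ y in cubeSet Q, |b y - c|) := by
        rw [hratio]; ring
    _ = 2^m * avg Q (fun y => |b y - c|) := by rw [avg_eq]
    _ ≤ 2^m * 1 := mul_le_mul_of_nonneg_left (hB Q) (by positivity)
    _ = 2^m := mul_one _
lemma stopFam_subset {b : Rd m → ℝ} {J₀ J : DC m} (h : stopFam b J₀ J) :
    cubeSet J ⊆ cubeSet J₀ := by
  induction h with
  | base => exact subset_rfl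
  | step P J hP hc ih => exact hc.1.1.trans ih

lemma stop_bound (hm : m ≠ 0) {b : Rd m → ℝ} {J₀ J : DC m} (hJ : stopFam b J₀ J)
    {x : Rd m} (hxJ : x ∈ cubeSet J) {k : ℤ}
    (hsubJ : cubeSet (cubeAt m k x) ⊆ cubeSet J)
    (hmin : ∀ J' : DC m, stopFam b J₀ J' → cubeSet (cubeAt m k x) ⊆ cubeSet J' →
      cubeSet J ⊆ cubeSet J') :
    |avg (cubeAt m k x) b - avg J b| ≤ 4 := by
  by_contra hcon
  push_neg at hcon
  have hJx : J = cubeAt m J.1 x := eq_cubeAt_of_mem hxJ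
  have hk : k ≤ J.1 := scale_le_of_subset hm hsubJ
  classical
  set S : Finset ℤ :=
    (Finset.Icc k J.1).filter (fun j => 4 < |avg (cubeAt m j x) b - avg J b|) with hSdef
  have hkS : k ∈ S :=
    Finset.mem_filter.mpr ⟨Finset.mem_Icc.mpr ⟨le_refl k, hk⟩, hcon⟩
  have hS : S.Nonempty := ⟨k, hkS⟩
  set k' := S.max' hS with hk'def
  obtain ⟨hIcc, hbad⟩ := Finset.mem_filter.mp (S.max'_mem hS)
  obtain ⟨hkk'1, hk'J⟩ := Finset.mem_Icc.mp hIcc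
  set J'' : DC m := cubeAt m k' x with hJ''def
  have hsub'' : cubeSet J'' ⊆ cubeSet J := by
    rw [hJx]
    exact nested x hk'J
  have hstop : isStopChild b J J'' := by
    refine ⟨⟨hsub'', hbad⟩, ?_⟩
    rintro J' ⟨hJ'sub, hJ'bad⟩ hsub
    have hxJ' : x ∈ cubeSet J' := hsub (mem_cubeAt k' x)
    have hJ'x : J' = cubeAt m J'.1 x := eq_cubeAt_of_mem hxJ'
    have h1 : k' ≤ J'.1 := scale_le_of_subset hm hsub
    have h2 : J'.1 ≤ J.1 := scale_le_of_subset hm hJ'sub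
    have h3 : J'.1 ∈ S := by
      refine Finset.mem_filter.mpr ⟨Finset.mem_Icc.mpr ⟨le_trans hkk'1 h1, h2⟩, ?_⟩
      rw [← hJ'x]
      exact hJ'bad
    have h4 : J'.1 ≤ k' := Finset.le_max' S _ h3
    have h5 : J'.1 = k' := le_antisymm h4 h1
    rw [hJ'x, h5]
  have hstopFam : stopFam b J₀ J'' := stopFam.step J J'' hJ hstop
  have hQsub : cubeSet (cubeAt m k x) ⊆ cubeSet J'' := nested x hkk'1
  have hJsub : cubeSet J ⊆ cubeSet J'' := hmin J'' hstopFam hQsub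
  have heq : cubeSet J'' = cubeSet J := le_antisymm hsub'' hJsub
  have havg : avg J'' b = avg J b := by rw [avg, avg, heq]
  rw [havg, sub_self, abs_zero] at hbad
  linarith

end Stmt2Aux

open Stmt2Aux in
/-- for each stopping cube `J ∈ F(J₀)`, the sum of the martingale differences
`Δ_Q b` over the dyadic cubes `Q ⊆ J₀` whose minimal stopping cube is `J` is bounded in `L^∞`
by a constant depending only on the dimension. -/
theorem stmt2 (m : ℕ) : ∃ C : ℝ, 0 < C ∧
    ∀ (b : Rd m → ℝ), MeasureTheory.LocallyIntegrable b volume → BMOle b 1 →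
    ∀ (J₀ J : DC m), stopFam b J₀ J →
      ∀ᵐ x ∂(volume : MeasureTheory.Measure (Rd m)),
        |∑' Q : DC m,
            ({Q : DC m | cubeSet Q ⊆ cubeSet J₀ ∧ cubeSet Q ⊆ cubeSet J ∧
                ∀ J' : DC m, stopFam b J₀ J' → cubeSet Q ⊆ cubeSet J' →
                  cubeSet J ⊆ cubeSet J'} : Set (DC m)).indicator
              (fun Q => mdiff b Q x) Q| ≤ C := by
  refine ⟨2^m + 4, by positivity, ?_⟩
  intro b hb hB J₀ J hJ
  refine Filter.Eventually.of_forall (fun x => ?_)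
  set Tset : Set (DC m) := {Q : DC m | cubeSet Q ⊆ cubeSet J₀ ∧ cubeSet Q ⊆ cubeSet J ∧
      ∀ J' : DC m, stopFam b J₀ J' → cubeSet Q ⊆ cubeSet J' → cubeSet J ⊆ cubeSet J'}
    with hTset
  set f : DC m → ℝ := Tset.indicator (fun Q => mdiff b Q x) with hfdef
  show |∑' Q : DC m, f Q| ≤ 2^m + 4
  have hCnn : (0:ℝ) ≤ 2^m + 4 := by positivity
  by_cases hm0 : m = 0
  · have hzero : ∀ Q : DC m, f Q = 0 := by
      intro Q
      have hmd : mdiff b Q x = 0 := by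
        rw [mdiff]
        split
        · have hcs : cubeSet (cubeAt m (Q.1 - 1) x) = cubeSet Q := by
            subst hm0
            ext y
            constructor
            · intro _ i
              exact i.elim0
            · intro _ i
              exact i.elim0
          rw [avg, avg, hcs, sub_self]
        · rfl
      rw [hfdef]
      by_cases hT : Q ∈ Tset
      · rw [Set.indicator_of_mem hT, hmd]
      · rw [Set.indicator_of_notMem hT]
    rw [show f = fun _ => (0:ℝ) from funext hzero, tsum_zero, abs_zero]
    exact hCnn
  by_cases hxJ : x ∈ cubeSet J
  swap
  · have hzero : ∀ Q : DC m, f Q = 0 := by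
      intro Q
      rw [hfdef]
      by_cases hT : Q ∈ Tset
      · rw [Set.indicator_of_mem hT, mdiff, if_neg (fun hx => hxJ (hT.2.1 hx))]
      · rw [Set.indicator_of_notMem hT]
    rw [show f = fun _ => (0:ℝ) from funext hzero, tsum_zero, abs_zero]
    exact hCnn
  · -- main case
    have hJx : J = cubeAt m J.1 x := eq_cubeAt_of_mem hxJ
    set e : ℕ → DC m := fun n => cubeAt m (J.1 - n) x with hedef
    have he : Function.Injective e := by
      intro a b hab
      have h1 : J.1 - (a:ℤ) = J.1 - (b:ℤ) := congrArg Prod.fst hab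
      omega
    have hrange : ∀ Q ∉ Set.range e, f Q = 0 := by
      intro Q hQ
      by_contra h0
      have hT : Q ∈ Tset := by
        by_contra hT
        rw [hfdef, Set.indicator_of_notMem hT] at h0
        exact h0 rfl
      have hmd : mdiff b Q x ≠ 0 := by
        rw [hfdef, Set.indicator_of_mem hT] at h0
        exact h0
      have hxQ : x ∈ cubeSet Q := by
        by_contra hx
        exact hmd (by rw [mdiff, if_neg hx])
      have hQx : Q = cubeAt m Q.1 x := eq_cubeAt_of_mem hxQ
      have hQ1 : Q.1 ≤ J.1 := scale_le_of_subset hm0 hT.2.1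
      refine hQ ⟨(J.1 - Q.1).toNat, ?_⟩
      rw [hedef]
      show cubeAt m (J.1 - ((J.1 - Q.1).toNat : ℤ)) x = Q
      rw [show J.1 - ((J.1 - Q.1).toNat : ℤ) = Q.1 by omega, ← hQx]
    set Pred : ℤ → Prop := fun k => cubeAt m k x ∈ Tset with hPdef
    have hPredUp : ∀ k k' : ℤ, Pred k → k ≤ k' → k' ≤ J.1 → Pred k' := by
      intro k k' hk hkk' hk'J
      have hsub : cubeSet (cubeAt m k' x) ⊆ cubeSet J := by
        rw [hJx]
        exact nested x hk'J
      exact ⟨hsub.trans (stopFam_subset hJ), hsub,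
        fun J' hJ' hsub' => hk.2.2 J' hJ' ((nested x hkk').trans hsub')⟩
    have hPredTop : Pred J.1 := by
      show cubeAt m J.1 x ∈ Tset
      rw [← hJx]
      exact ⟨stopFam_subset hJ, subset_rfl, fun J' _ hs => hs⟩
    have hfe : ∀ n : ℕ, f (e n) =
        if Pred (J.1 - n) then
          avg (cubeAt m (J.1 - n - 1) x) b - avg (cubeAt m (J.1 - n) x) b
        else 0 := by
      intro n
      by_cases hPn : Pred (J.1 - n)
      · rw [if_pos hPn, hfdef, Set.indicator_of_mem hPn, mdiff,
          if_pos (mem_cubeAt (J.1 - n) x)]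
        rfl
      · rw [if_neg hPn, hfdef, Set.indicator_of_notMem hPn]
    have hpartial : ∀ N : ℕ, (∑ n ∈ Finset.range N, f (e n)) = 0 ∨
        ∃ c : ℤ, Pred c ∧ (∑ n ∈ Finset.range N, f (e n)) =
          avg (cubeAt m (c - 1) x) b - avg J b := by
      intro N
      induction N with
      | zero => left; simp
      | succ N ih =>
        by_cases hPN : Pred (J.1 - N)
        · right
          refine ⟨J.1 - N, hPN, ?_⟩
          have hall : ∀ n ∈ Finset.range (N+1), f (e n) =
              (fun i : ℕ => avg (cubeAt m (J.1 - i) x) b) (n+1) -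
              (fun i : ℕ => avg (cubeAt m (J.1 - i) x) b) n := by
            intro n hn
            rw [Finset.mem_range] at hn
            have hPn : Pred (J.1 - n) := hPredUp _ _ hPN (by omega) (by omega)
            rw [hfe n, if_pos hPn]
            have harg : J.1 - (n:ℤ) - 1 = J.1 - ((n+1 : ℕ) : ℤ) := by push_cast; ring
            rw [harg]
          rw [Finset.sum_congr rfl hall, Finset.sum_range_sub
            (fun i : ℕ => avg (cubeAt m (J.1 - i) x) b) (N+1)]
          have h1 : J.1 - ((N+1 : ℕ) : ℤ) = J.1 - (N:ℤ) - 1 := by push_cast; ring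
          have h2 : J.1 - ((0 : ℕ) : ℤ) = J.1 := by push_cast; ring
          rw [h1, h2, ← hJx]
        · rw [Finset.sum_range_succ, hfe N, if_neg hPN, add_zero]
          exact ih
    have hbound : ∀ N : ℕ, |∑ n ∈ Finset.range N, f (e n)| ≤ 2^m + 4 := by
      intro N
      rcases hpartial N with h | ⟨c, hc, h⟩
      · rw [h, abs_zero]
        exact hCnn
      · rw [h]
        have h1 : |avg (cubeAt m (c-1) x) b - avg (cubeAt m c x) b| ≤ 2^m :=
          child_bound hb hB c x
        have h2 : |avg (cubeAt m c x) b - avg J b| ≤ 4 :=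
          stop_bound hm0 hJ hxJ hc.2.1 hc.2.2
        calc |avg (cubeAt m (c-1) x) b - avg J b|
            ≤ |avg (cubeAt m (c-1) x) b - avg (cubeAt m c x) b| +
              |avg (cubeAt m c x) b - avg J b| := abs_sub_le _ _ _
          _ ≤ 2^m + 4 := add_le_add h1 h2
    by_cases hsum : Summable f
    · have hS : HasSum f (∑' Q : DC m, f Q) := hsum.hasSum
      have hS' : HasSum (f ∘ e) (∑' Q : DC m, f Q) := (he.hasSum_iff hrange).mpr hS
      exact le_of_tendsto hS'.tendsto_sum_nat.abs (Filter.Eventually.of_forall hbound)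
    · rw [tsum_eq_zero_of_not_summable hsum, abs_zero]
      exact hCnn
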